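/- For the double wheel graph DW_n with n odd, n ≥ 3, the chromatic number is 4 and the minimum colouring sum over proper 4-colourings equals 3n + 7. -/

import Mathlib

open Finset

/-- The colouring sum ω(C) = Σ_{i=1}^{k} i·θ(c_i), computed as the sum over
vertices of (colour index + 1). -/
def colSum {V : Type*} [Fintype V] {k : ℕ} (c : V → Fin k) : ℕ :=
  ∑ v, ((c v : ℕ) + 1)

/-- A proper colouring: adjacent vertices get distinct colours. -/
def IsProper {V : Type*} (G : SimpleGraph V) {k : ℕ} (c : V → Fin k) : Prop :=
  ∀ u v, G.Adj u v → c u ≠ c v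

/-- The cycle graph C_n on `Fin n`. -/
def cycleGraph (n : ℕ) : SimpleGraph (Fin n) :=
  SimpleGraph.fromRel (fun i j => (j : ℕ) = ((i : ℕ) + 1) % n)

/-- The double wheel DW_n = 2C_n + K_1: two disjoint n-cycles plus a central
vertex adjacent to all cycle vertices. -/
def doubleWheel (n : ℕ) : SimpleGraph (Fin n ⊕ Fin n ⊕ Unit) :=
  SimpleGraph.fromRel (fun a b =>
    match a, b with
    | Sum.inl i, Sum.inl j => (j : ℕ) = ((i : ℕ) + 1) % n
    | Sum.inr (Sum.inl i), Sum.inr (Sum.inl j) => (j : ℕ) = ((i : ℕ) + 1) % n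
    | _, Sum.inr (Sum.inr _) => True
    | _, _ => False)

/-- The helm graph H_n: wheel C_n + K_1 together with a pendant vertex attached
to each cycle vertex.  `Sum.inl i` are cycle vertices, `Sum.inr (Sum.inl i)`
pendants, `Sum.inr (Sum.inr ())` the centre. -/
def helm (n : ℕ) : SimpleGraph (Fin n ⊕ Fin n ⊕ Unit) :=
  SimpleGraph.fromRel (fun a b =>
    match a, b with
    | Sum.inl i, Sum.inl j => (j : ℕ) = ((i : ℕ) + 1) % n
    | Sum.inl i, Sum.inr (Sum.inl j) => i = j
    | Sum.inl _, Sum.inr (Sum.inr _) => True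
    | _, _ => False)

/-- The sunlet graph S_n = C_n ⊙ K_1: a pendant vertex attached to each vertex
of the cycle C_n. -/
def sunlet (n : ℕ) : SimpleGraph (Fin n ⊕ Fin n) :=
  SimpleGraph.fromRel (fun a b =>
    match a, b with
    | Sum.inl i, Sum.inl j => (j : ℕ) = ((i : ℕ) + 1) % n
    | Sum.inl i, Sum.inr j => i = j
    | _, _ => False)

/-- The web graph W_n: the prism C_n □ P_2 (inner cycle `inl i`, outer cycle
`inr (inl i)`) with a pendant vertex `inr (inr i)` attached to each outer
cycle vertex. -/
def webGraph (n : ℕ) : SimpleGraph (Fin n ⊕ Fin n ⊕ Fin n) :=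
  SimpleGraph.fromRel (fun a b =>
    match a, b with
    | Sum.inl i, Sum.inl j => (j : ℕ) = ((i : ℕ) + 1) % n
    | Sum.inr (Sum.inl i), Sum.inr (Sum.inl j) => (j : ℕ) = ((i : ℕ) + 1) % n
    | Sum.inl i, Sum.inr (Sum.inl j) => i = j
    | Sum.inr (Sum.inl i), Sum.inr (Sum.inr j) => i = j
    | _, _ => False)

/-- The closed helm CH_3: inner triangle `inl i`, outer triangle `inr (inl i)`,
spokes v_i–u_i, and centre `inr (inr ())` adjacent to the inner triangle. -/
def closedHelm3 : SimpleGraph (Fin 3 ⊕ Fin 3 ⊕ Unit) :=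
  SimpleGraph.fromRel (fun a b =>
    match a, b with
    | Sum.inl i, Sum.inl j => (j : ℕ) = ((i : ℕ) + 1) % 3
    | Sum.inr (Sum.inl i), Sum.inr (Sum.inl j) => (j : ℕ) = ((i : ℕ) + 1) % 3
    | Sum.inl i, Sum.inr (Sum.inl j) => i = j
    | Sum.inl _, Sum.inr (Sum.inr _) => True
    | _, _ => False)

/-- A b-colouring with k colours: a proper k-colouring such that every colour
class contains a vertex adjacent to vertices of all other colours. -/
def IsBColoring {V : Type*} (G : SimpleGraph V) {k : ℕ} (c : V → Fin k) : Prop :=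
  IsProper G c ∧
    ∀ i : Fin k, ∃ v, c v = i ∧ ∀ j : Fin k, j ≠ i → ∃ u, G.Adj v u ∧ c u = j


section DWAux

lemma fin_add_one_val (n : ℕ) [NeZero n] (hn : 3 ≤ n) (i : Fin n) :
    ((i + 1 : Fin n) : ℕ) = ((i : ℕ) + 1) % n := by
  rw [Fin.val_add, Fin.val_one', Nat.mod_eq_of_lt (show 1 < n by omega)]

lemma fin_ne_add_one (n : ℕ) [NeZero n] (hn : 3 ≤ n) (i : Fin n) : i ≠ i + 1 := by
  intro h
  have h2 := congrArg Fin.val h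
  rw [fin_add_one_val n hn] at h2
  rcases Nat.lt_or_ge ((i:ℕ)+1) n with h3 | h3
  · rw [Nat.mod_eq_of_lt h3] at h2; omega
  · have h4 : (i:ℕ)+1 = n := by have := i.isLt; omega
    rw [h4, Nat.mod_self] at h2
    have := i.isLt; omega

/-- an odd cycle cannot be coloured with two colours -/
lemma odd_cycle_not_two (n : ℕ) [NeZero n] (hn : 3 ≤ n) (hodd : Odd n) {k : ℕ}
    (f : Fin n → Fin k) (h1 : ∀ i, f i ≠ f (i + 1))
    (x y : Fin k) (hall : ∀ i, f i = x ∨ f i = y) : False := by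
  have key : ∀ m (hm : m < n), if Even m then f ⟨m, hm⟩ = f 0 else f ⟨m, hm⟩ ≠ f 0 := by
    intro m
    induction m with
    | zero => intro hm; simp [show (⟨0, hm⟩ : Fin n) = 0 from rfl]
    | succ m ih =>
      intro hm
      have hm' : m < n := by omega
      have ihm := ih hm'
      have hstep : f ⟨m, hm'⟩ ≠ f ⟨m+1, hm⟩ := by
        have := h1 ⟨m, hm'⟩
        have hv : (⟨m, hm'⟩ : Fin n) + 1 = ⟨m+1, hm⟩ := by
          apply Fin.ext
          rw [fin_add_one_val n hn]
          exact Nat.mod_eq_of_lt hm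
        rwa [hv] at this
      by_cases he : Even (m+1)
      · simp only [he, if_true]
        have hom : ¬ Even m := Nat.even_add_one.mp he
        simp only [hom, if_false] at ihm
        rcases hall ⟨m+1, hm⟩ with h | h <;> rcases hall ⟨m, hm'⟩ with h' | h' <;>
          rcases hall 0 with h0 | h0 <;> simp_all
      · simp only [he, if_false]
        have hom : Even m := by rw [Nat.even_add_one] at he; exact not_not.mp he
        simp only [hom, if_true] at ihm
        rw [← ihm]; exact fun hh => hstep hh.symm
  have hlast := key (n-1) (by omega)
  have he : Even (n-1) := by
    rcases hodd with ⟨j, hj⟩; exact ⟨j, by omega⟩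
  simp only [he, if_true] at hlast
  have hadj := h1 ⟨n-1, by omega⟩
  have hv : (⟨n-1, by omega⟩ : Fin n) + 1 = 0 := by
    apply Fin.ext
    rw [fin_add_one_val n hn]
    simp [show n - 1 + 1 = n by omega]
  rw [hv, hlast] at hadj
  exact hadj rfl

def vmax' : Fin 4 → Fin 4 := ![3, 3, 3, 2]
def mp' : Fin 4 → ℕ := ![5, 4, 3, 3]
def imp' : Fin 4 → ℕ := ![1, 1, 2, 1]
def oth1' : Fin 4 → Fin 4 := ![1, 0, 0, 0]
def oth2' : Fin 4 → Fin 4 := ![2, 2, 1, 1]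

lemma fact1' : ∀ (a x : Fin 4), x ≠ a → x ≠ vmax' a →
    mp' a + imp' a ≤ ((x:ℕ)+1) + (((vmax' a):ℕ)+1) := by decide

lemma fact2' : ∀ (a x y : Fin 4), x ≠ a → y ≠ a → x ≠ y → mp' a ≤ ((x:ℕ)+1)+((y:ℕ)+1) := by
  decide

lemma fact3' : ∀ (a b : Fin 4), b ≠ a → b ≠ vmax' a → b = oth1' a ∨ b = oth2' a := by decide

lemma table' : ∀ a : Fin 4,
    (mp' a = 5 ∧ imp' a = 1 ∧ (a:ℕ) = 0) ∨ (mp' a = 4 ∧ imp' a = 1 ∧ (a:ℕ) = 1) ∨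
    (mp' a = 3 ∧ imp' a = 2 ∧ (a:ℕ) = 2) ∨ (mp' a = 3 ∧ imp' a = 1 ∧ (a:ℕ) = 3) := by decide

def o1'' : Fin 3 → Fin 3 := ![1, 0, 0]
def o2'' : Fin 3 → Fin 3 := ![2, 2, 1]

lemma fin3_lemma : ∀ (a x : Fin 3), x ≠ a → x = o1'' a ∨ x = o2'' a := by decide

lemma cycle_bound (n : ℕ) [NeZero n] (hn : 3 ≤ n) (hodd : Odd n)
    (f : Fin n → Fin 4) (a : Fin 4) (h1 : ∀ i, f i ≠ f (i + 1)) (h2 : ∀ i, f i ≠ a) :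
    n * mp' a + 2 * imp' a ≤ 2 * ∑ i, ((f i : ℕ) + 1) := by
  obtain ⟨w, hwv⟩ : ∃ w, f w = vmax' a := by
    by_contra h; push_neg at h
    exact odd_cycle_not_two n hn hodd f h1 (oth1' a) (oth2' a)
      (fun i => fact3' a (f i) (h2 i) (h i))
  have hsum2 : 2 * ∑ i, ((f i : ℕ) + 1)
      = ∑ i : Fin n, ((((f i : ℕ)) + 1) + (((f (i+1) : ℕ)) + 1)) := by
    have hrot : ∑ i : Fin n, (((f (i+1) : ℕ)) + 1) = ∑ i : Fin n, (((f i : ℕ)) + 1) :=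
      Fintype.sum_equiv (Equiv.addRight 1) _ _ (fun i => rfl)
    conv_rhs => rw [Finset.sum_add_distrib]
    rw [hrot, two_mul]
  have hwne : w - 1 ≠ w := by
    intro h
    have h' : w = w + 1 := by
      have := congrArg (· + 1) h
      simpa using this
    have := h1 w
    rw [← h'] at this
    exact this rfl
  set s : Finset (Fin n) := {w - 1, w} with hs
  have hcard : s.card = 2 := by
    rw [hs, Finset.card_insert_of_notMem (by simp [hwne]), Finset.card_singleton]
  have hsump : ∑ i : Fin n, (mp' a + (if i ∈ s then imp' a else 0)) = n * mp' a + 2 * imp' a := by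
    rw [Finset.sum_add_distrib, Finset.sum_const, Finset.card_univ, Fintype.card_fin,
      smul_eq_mul]
    congr 1
    rw [Finset.sum_ite_mem, Finset.univ_inter, Finset.sum_const, hcard, smul_eq_mul]
  rw [hsum2, ← hsump]
  apply Finset.sum_le_sum
  intro i _
  by_cases hi : i ∈ s
  · simp only [hi, if_true]
    rcases Finset.mem_insert.mp hi with h | h
    · have hi1 : i + 1 = w := by rw [h]; exact sub_add_cancel w 1
      rw [hi1, hwv]
      exact fact1' a (f i) (h2 i) (by rw [← hwv, ← hi1]; exact h1 i)
    · have h' : i = w := Finset.mem_singleton.mp h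
      rw [h', hwv]
      have := fact1' a (f (w+1)) (h2 (w+1)) (by rw [← hwv]; exact fun hh => (h1 w) hh.symm)
      omega
  · simp only [hi, if_false, add_zero]
    exact fact2' a (f i) (f (i+1)) (h2 i) (h2 (i+1)) (h1 i)

lemma mod_succ_helper (n k : ℕ) (hk : k < n) : (k+1) % n = if k+1 = n then 0 else k+1 := by
  split_ifs with h
  · rw [h, Nat.mod_self]
  · exact Nat.mod_eq_of_lt (by omega)

def cyc (n : ℕ) (i : Fin n) : Fin 4 :=
  if (i:ℕ) = n - 1 then 2 else if Even (i:ℕ) then 0 else 1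

lemma cyc_ne (n : ℕ) (hn : 3 ≤ n) (ho : n % 2 = 1) (i j : Fin n)
    (hj : (j:ℕ) = ((i:ℕ) + 1) % n) : cyc n i ≠ cyc n j := by
  have hi' := i.isLt
  have hj' := j.isLt
  rw [mod_succ_helper n (i:ℕ) hi'] at hj
  unfold cyc
  split_ifs at hj ⊢ with h1 h2 h3 h4 h5 h6 h7 <;>
    first
      | decide
      | (exfalso; (try simp only [Nat.even_iff] at *); omega)

lemma cyc_ne_three (n : ℕ) (i : Fin n) : cyc n i ≠ 3 := by
  unfold cyc; split_ifs <;> decide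

lemma sum12 (m : ℕ) : ∑ k ∈ Finset.range m, (if Even k then 1 else 2) = m + m / 2 := by
  induction m with
  | zero => simp
  | succ m ih =>
    rw [Finset.sum_range_succ, ih]
    by_cases h : Even m
    · rw [if_pos h]
      rw [Nat.even_iff] at h
      omega
    · rw [if_neg h]
      rw [Nat.even_iff] at h
      omega

lemma cycSum (n : ℕ) (hn : 3 ≤ n) :
    ∑ i : Fin n, ((cyc n i : ℕ) + 1) = (n-1) + (n-1)/2 + 3 := by
  have key : ∀ i : Fin n, ((cyc n i : ℕ) + 1)
      = (fun k => if k = n - 1 then 3 else if Even k then 1 else 2) (i : ℕ) := by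
    intro i
    unfold cyc
    by_cases h1 : (i:ℕ) = n - 1
    · simp only [h1, if_pos rfl, if_true]; rfl
    · rw [if_neg h1]
      by_cases h2 : Even (i:ℕ)
      · simp only [if_neg h1, if_pos h2]; rfl
      · simp only [if_neg h1, if_neg h2]; rfl
  rw [Finset.sum_congr rfl (fun i _ => key i), Fin.sum_univ_eq_sum_range
    (fun k => if k = n - 1 then 3 else if Even k then 1 else 2) n]
  obtain ⟨m, rfl⟩ : ∃ m, n = m + 1 := ⟨n - 1, by omega⟩
  simp only [Nat.add_sub_cancel]
  rw [Finset.sum_range_succ, if_pos rfl]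
  have : ∀ k ∈ Finset.range m, (if k = m then 3 else if Even k then 1 else 2)
      = (if Even k then (1:ℕ) else 2) := by
    intro k hk
    rw [Finset.mem_range] at hk
    rw [if_neg (by omega)]
  rw [Finset.sum_congr rfl this, sum12]

def dwCol (n : ℕ) : Fin n ⊕ Fin n ⊕ Unit → Fin 4 :=
  Sum.elim (cyc n) (Sum.elim (cyc n) (fun _ => (3 : Fin 4)))

lemma dw_adj1 (n : ℕ) [NeZero n] (hn : 3 ≤ n) (i : Fin n) :
    (doubleWheel n).Adj (Sum.inl i) (Sum.inl (i+1)) := by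
  rw [doubleWheel, SimpleGraph.fromRel_adj]
  exact ⟨by simpa using fin_ne_add_one n hn i, Or.inl (fin_add_one_val n hn i)⟩

lemma dw_adj2 (n : ℕ) [NeZero n] (hn : 3 ≤ n) (i : Fin n) :
    (doubleWheel n).Adj (Sum.inr (Sum.inl i)) (Sum.inr (Sum.inl (i+1))) := by
  rw [doubleWheel, SimpleGraph.fromRel_adj]
  exact ⟨by simpa using fin_ne_add_one n hn i, Or.inl (fin_add_one_val n hn i)⟩

lemma dw_adj3 (n : ℕ) (i : Fin n) :
    (doubleWheel n).Adj (Sum.inl i) (Sum.inr (Sum.inr ())) := by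
  rw [doubleWheel, SimpleGraph.fromRel_adj]
  exact ⟨by simp, Or.inl trivial⟩

lemma dw_adj4 (n : ℕ) (i : Fin n) :
    (doubleWheel n).Adj (Sum.inr (Sum.inl i)) (Sum.inr (Sum.inr ())) := by
  rw [doubleWheel, SimpleGraph.fromRel_adj]
  exact ⟨by simp, Or.inl trivial⟩

lemma colSum_decomp (n : ℕ) [NeZero n] (c : Fin n ⊕ Fin n ⊕ Unit → Fin 4) :
    colSum c = (∑ i : Fin n, ((c (Sum.inl i) : ℕ) + 1))
      + ((∑ i : Fin n, ((c (Sum.inr (Sum.inl i)) : ℕ) + 1))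
        + ((c (Sum.inr (Sum.inr ())) : ℕ) + 1)) := by
  unfold colSum
  rw [Fintype.sum_sum_type, Fintype.sum_sum_type]
  simp

end DWAux

theorem stmt_3 (n : ℕ) (hn : 3 ≤ n) (hodd : Odd n) :
    (doubleWheel n).chromaticNumber = 4 ∧
    IsLeast {s : ℕ | ∃ c : Fin n ⊕ Fin n ⊕ Unit → Fin 4,
      IsProper (doubleWheel n) c ∧ Function.Surjective c ∧ s = colSum c} (3 * n + 7) := by
  haveI : NeZero n := ⟨by omega⟩
  have ho : n % 2 = 1 := Nat.odd_iff.mp hodd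
  have hprop : IsProper (doubleWheel n) (dwCol n) := by
    intro u v h
    rw [doubleWheel, SimpleGraph.fromRel_adj] at h
    obtain ⟨hne, h | h⟩ := h <;>
      rcases u with i | i | ⟨⟩ <;> rcases v with j | j | ⟨⟩ <;>
      first
      | exact h.elim
      | exact (hne rfl).elim
      | exact cyc_ne n hn ho _ _ h
      | exact (cyc_ne n hn ho _ _ h).symm
      | exact cyc_ne_three n _
      | exact (fun hh => cyc_ne_three n _ hh.symm)
  have hsurj : Function.Surjective (dwCol n) := by
    intro y
    fin_cases y
    · refine ⟨Sum.inl ⟨0, by omega⟩, ?_⟩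
      show cyc n ⟨0, by omega⟩ = _
      unfold cyc
      rw [if_neg (by simp; omega), if_pos (by exact Even.zero)]
      rfl
    · refine ⟨Sum.inl ⟨1, by omega⟩, ?_⟩
      show cyc n ⟨1, by omega⟩ = _
      unfold cyc
      rw [if_neg (by simp; omega), if_neg (by simp)]
      rfl
    · refine ⟨Sum.inl ⟨n - 1, by omega⟩, ?_⟩
      show cyc n ⟨n - 1, by omega⟩ = _
      unfold cyc
      rw [if_pos rfl]
      rfl
    · exact ⟨Sum.inr (Sum.inr ()), rfl⟩
  have hcs : colSum (dwCol n) = 3 * n + 7 := by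
    rw [colSum_decomp]
    show (∑ i : Fin n, ((cyc n i : ℕ) + 1)) + ((∑ i : Fin n, ((cyc n i : ℕ) + 1)) + 4)
      = 3 * n + 7
    rw [cycSum n hn]
    omega
  constructor
  · have h4 : (doubleWheel n).Colorable 4 :=
      ⟨SimpleGraph.Coloring.mk (dwCol n) (fun {u v} h => hprop u v h)⟩
    have h3 : ¬ (doubleWheel n).Colorable 3 := by
      rintro ⟨C⟩
      have h1 : ∀ i : Fin n, C (Sum.inl i) ≠ C (Sum.inl (i+1)) :=
        fun i => C.valid (dw_adj1 n hn i)
      have h2 : ∀ i : Fin n, C (Sum.inl i) ≠ C (Sum.inr (Sum.inr ())) :=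
        fun i => C.valid (dw_adj3 n i)
      exact odd_cycle_not_two n hn hodd (fun i => C (Sum.inl i)) h1
        (o1'' (C (Sum.inr (Sum.inr ())))) (o2'' (C (Sum.inr (Sum.inr ()))))
        (fun i => fin3_lemma _ _ (h2 i))
    refine le_antisymm (by exact_mod_cast h4.chromaticNumber_le) ?_
    by_contra hc
    push_neg at hc
    apply h3
    apply SimpleGraph.chromaticNumber_le_iff_colorable.mp
    have h34 : (4 : ℕ∞) = (3 : ℕ∞) + 1 := by norm_num
    rw [h34] at hc
    exact Order.le_of_lt_add_one hc
  · constructor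
    · exact ⟨dwCol n, hprop, hsurj, hcs.symm⟩
    · rintro s ⟨c, hp, -, rfl⟩
      have h1a : ∀ i : Fin n, c (Sum.inl i) ≠ c (Sum.inl (i+1)) :=
        fun i => hp _ _ (dw_adj1 n hn i)
      have h2a : ∀ i : Fin n, c (Sum.inl i) ≠ c (Sum.inr (Sum.inr ())) :=
        fun i => hp _ _ (dw_adj3 n i)
      have h1b : ∀ i : Fin n, c (Sum.inr (Sum.inl i)) ≠ c (Sum.inr (Sum.inl (i+1))) :=
        fun i => hp _ _ (dw_adj2 n hn i)
      have h2b : ∀ i : Fin n, c (Sum.inr (Sum.inl i)) ≠ c (Sum.inr (Sum.inr ())) :=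
        fun i => hp _ _ (dw_adj4 n i)
      have hb1 := cycle_bound n hn hodd (fun i => c (Sum.inl i))
        (c (Sum.inr (Sum.inr ()))) h1a h2a
      have hb2 := cycle_bound n hn hodd (fun i => c (Sum.inr (Sum.inl i)))
        (c (Sum.inr (Sum.inr ()))) h1b h2b
      rw [colSum_decomp]
      rcases table' (c (Sum.inr (Sum.inr ()))) with ⟨e1, e2, e3⟩ | ⟨e1, e2, e3⟩ |
        ⟨e1, e2, e3⟩ | ⟨e1, e2, e3⟩ <;> rw [e1, e2] at hb1 hb2 <;> rw [e3] <;> omega
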